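/- Let k ≥ 12 be an even integer and let a : ℕ → ℝ satisfy a(1) = 1 and |a(n)| ≤ d(n)·n^{(k−1)/2} for all n ≥ 1, where d(n) is the number of divisors of n. Then the series Σ_{n=1}^∞ (a(n)/n^{k/2}) · ∫_{2πn}^∞ e^{−x} x^{k/2 − 1} dx converges absolutely, and |(2/Γ(k/2)) · Σ_{n=1}^∞ (a(n)/n^{k/2}) · ∫_{2πn}^∞ e^{−x} x^{k/2 − 1} dx| ≤ 2·√k·log(2k) + 1. -/

import Mathlib

open Real MeasureTheory Set


private lemma sum_inv_sqrt_le (M : ℕ) :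
    ∑ e ∈ Finset.Icc 1 M, (1 / Real.sqrt e) ≤ 2 * Real.sqrt M := by
  induction M with
  | zero => simp
  | succ M ih =>
    rw [Finset.sum_Icc_succ_top (by norm_num : 1 ≤ M + 1)]
    have hM : (0:ℝ) ≤ M := Nat.cast_nonneg M
    have h1 : Real.sqrt M ^ 2 = (M:ℝ) := Real.sq_sqrt hM
    have h2 : Real.sqrt ((M:ℝ)+1) ^ 2 = (M:ℝ)+1 := Real.sq_sqrt (by linarith)
    have hs : 0 < Real.sqrt ((M:ℝ)+1) := Real.sqrt_pos.mpr (by linarith)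
    have hmul : Real.sqrt M * Real.sqrt ((M:ℝ)+1) ≤ (M:ℝ) + 1/2 := by
      nlinarith [sq_nonneg (Real.sqrt M - Real.sqrt ((M:ℝ)+1))]
    have key : 1 / Real.sqrt ((M:ℝ)+1) ≤ 2 * Real.sqrt ((M:ℝ)+1) - 2 * Real.sqrt M := by
      rw [div_le_iff₀ hs]
      nlinarith
    have hcast : ((M + 1 : ℕ) : ℝ) = (M:ℝ) + 1 := by push_cast; ring
    rw [hcast]
    linarith

private lemma sum_inv_le_log (N : ℕ) :
    ∑ d ∈ Finset.Icc 1 N, (1 / (d:ℝ)) ≤ Real.log N + 1 := by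
  have h := harmonic_le_one_add_log N
  have h2 : ((harmonic N : ℚ) : ℝ) = ∑ d ∈ Finset.Icc 1 N, (1/(d:ℝ)) := by
    rw [harmonic_eq_sum_Icc]
    push_cast
    simp [one_div]
  linarith [h2 ▸ h]



private lemma hyperbola (N : ℕ) :
    ∑ n ∈ Finset.Icc 1 N, ((n.divisors.card : ℝ) / Real.sqrt n)
      ≤ 2 * Real.sqrt N * (Real.log N + 1) := by
  have step1 : ∑ n ∈ Finset.Icc 1 N, ((n.divisors.card : ℝ) / Real.sqrt n)
      = ∑ p ∈ (Finset.Icc 1 N).sigma (fun n => n.divisors), (1 / Real.sqrt p.1) := by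
    rw [Finset.sum_sigma]
    refine Finset.sum_congr rfl fun n _ => ?_
    simp only [Finset.sum_const, nsmul_eq_mul]
    ring
  have step2 : ∑ p ∈ (Finset.Icc 1 N).sigma (fun n => n.divisors), (1 / Real.sqrt p.1)
      = ∑ p ∈ (Finset.Icc 1 N).sigma (fun d => Finset.Icc 1 (N/d)),
          (1 / Real.sqrt ((p.1 : ℝ) * (p.2 : ℝ))) := by
    refine Finset.sum_nbij' (fun p => ⟨p.2, p.1 / p.2⟩) (fun p => ⟨p.1 * p.2, p.1⟩)
      ?_ ?_ ?_ ?_ ?_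
    · rintro ⟨n, d⟩ hp
      simp only [Finset.mem_sigma, Finset.mem_Icc, Nat.mem_divisors] at hp ⊢
      obtain ⟨⟨hn1, hnN⟩, hd, hn0⟩ := hp
      have hd0 : 0 < d := Nat.pos_of_dvd_of_pos hd hn1
      refine ⟨⟨hd0, (Nat.le_of_dvd hn1 hd).trans hnN⟩, ?_, ?_⟩
      · exact (Nat.one_le_div_iff hd0).mpr (Nat.le_of_dvd hn1 hd)
      · exact Nat.div_le_div_right hnN
    · rintro ⟨d, e⟩ hp
      simp only [Finset.mem_sigma, Finset.mem_Icc, Nat.mem_divisors] at hp ⊢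
      obtain ⟨⟨hd1, hdN⟩, he1, heN⟩ := hp
      have hde : d * e ≤ N := by
        rw [Nat.le_div_iff_mul_le hd1] at heN
        calc d * e = e * d := Nat.mul_comm d e
          _ ≤ N := heN
      exact ⟨⟨Nat.one_le_iff_ne_zero.mpr (by positivity), hde⟩, ⟨e, rfl⟩, by positivity⟩
    · rintro ⟨n, d⟩ hp
      simp only [Finset.mem_sigma, Finset.mem_Icc, Nat.mem_divisors] at hp
      obtain ⟨⟨hn1, _⟩, hd, _⟩ := hp
      show (⟨d * (n / d), d⟩ : Σ _ : ℕ, ℕ) = ⟨n, d⟩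
      rw [Nat.mul_div_cancel' hd]
    · rintro ⟨d, e⟩ hp
      simp only [Finset.mem_sigma, Finset.mem_Icc] at hp
      have hd0 : 0 < d := hp.1.1
      show (⟨d, d * e / d⟩ : Σ _ : ℕ, ℕ) = ⟨d, e⟩
      rw [Nat.mul_div_cancel_left e hd0]
    · rintro ⟨n, d⟩ hp
      simp only [Finset.mem_sigma, Finset.mem_Icc, Nat.mem_divisors] at hp
      obtain ⟨⟨hn1, _⟩, hd, _⟩ := hp
      show 1 / Real.sqrt n = 1 / Real.sqrt ((d : ℝ) * ((n / d : ℕ) : ℝ))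
      rw [← Nat.cast_mul, Nat.mul_div_cancel' hd]
  rw [step1, step2, Finset.sum_sigma]
  have step3 : ∀ d ∈ Finset.Icc 1 N,
      ∑ e ∈ Finset.Icc 1 (N/d), (1 / Real.sqrt ((d:ℝ) * (e:ℝ)))
        ≤ 2 * Real.sqrt N * (1/(d:ℝ)) := by
    intro d hd
    rw [Finset.mem_Icc] at hd
    have hd0 : (0:ℝ) < d := by exact_mod_cast hd.1
    have hsd : 0 < Real.sqrt d := Real.sqrt_pos.mpr hd0
    have e1 : ∑ e ∈ Finset.Icc 1 (N/d), (1 / Real.sqrt ((d:ℝ) * (e:ℝ)))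
        = (1 / Real.sqrt d) * ∑ e ∈ Finset.Icc 1 (N/d), (1 / Real.sqrt e) := by
      rw [Finset.mul_sum]
      refine Finset.sum_congr rfl fun e _ => ?_
      rw [Real.sqrt_mul (Nat.cast_nonneg d), one_div, one_div, one_div, mul_inv]
    rw [e1]
    have e2 : ∑ e ∈ Finset.Icc 1 (N/d), (1 / Real.sqrt e) ≤ 2 * (Real.sqrt N / Real.sqrt d) := by
      refine (sum_inv_sqrt_le (N/d)).trans ?_
      have h3 : ((N/d : ℕ) : ℝ) ≤ (N:ℝ)/(d:ℝ) := Nat.cast_div_le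
      have h4 : Real.sqrt ((N/d : ℕ):ℝ) ≤ Real.sqrt ((N:ℝ)/(d:ℝ)) := Real.sqrt_le_sqrt h3
      rw [Real.sqrt_div (Nat.cast_nonneg N)] at h4
      linarith
    calc (1 / Real.sqrt d) * ∑ e ∈ Finset.Icc 1 (N/d), (1 / Real.sqrt e)
        ≤ (1 / Real.sqrt d) * (2 * (Real.sqrt N / Real.sqrt d)) := by
          apply mul_le_mul_of_nonneg_left e2 (by positivity)
      _ = 2 * Real.sqrt N * (1 / (Real.sqrt d * Real.sqrt d)) := by
          field_simp
      _ = 2 * Real.sqrt N * (1/(d:ℝ)) := by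
          rw [Real.mul_self_sqrt (Nat.cast_nonneg d)]
  calc ∑ d ∈ Finset.Icc 1 N, ∑ e ∈ Finset.Icc 1 (N/d), (1 / Real.sqrt ((d:ℝ)*(e:ℝ)))
      ≤ ∑ d ∈ Finset.Icc 1 N, 2 * Real.sqrt N * (1/(d:ℝ)) := Finset.sum_le_sum step3
    _ = 2 * Real.sqrt N * ∑ d ∈ Finset.Icc 1 N, (1/(d:ℝ)) := by rw [← Finset.mul_sum]
    _ ≤ 2 * Real.sqrt N * (Real.log N + 1) :=
        mul_le_mul_of_nonneg_left (sum_inv_le_log N) (by positivity)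



private lemma integral_le_gamma {σ c : ℝ} (hσ : 0 < σ) (hc : 0 ≤ c) :
    ∫ x in Set.Ioi c, Real.exp (-x) * x ^ (σ - 1) ≤ Real.Gamma σ := by
  rw [Real.Gamma_eq_integral hσ]
  refine setIntegral_mono_set (Real.GammaIntegral_convergent hσ) ?_
    ((Set.Ioi_subset_Ioi hc).eventuallyLE)
  filter_upwards [self_mem_ae_restrict measurableSet_Ioi] with x hx
  exact mul_nonneg (Real.exp_pos _).le (Real.rpow_nonneg (le_of_lt hx) _)

private lemma half_integrable {σ : ℝ} (hσ : 0 < σ) :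
    IntegrableOn (fun x : ℝ => Real.exp (-(x/2)) * x ^ (σ - 1)) (Set.Ioi 0) := by
  have h := integrableOn_rpow_mul_exp_neg_mul_rpow
    (by linarith : (-1:ℝ) < σ - 1) (zero_lt_one) (by norm_num : (0:ℝ) < 1/2)
  refine h.congr_fun ?_ measurableSet_Ioi
  intro x hx
  simp only [Real.rpow_one]
  rw [mul_comm]
  congr 1
  ring

private lemma half_integral {σ : ℝ} (hσ : 0 < σ) :
    ∫ x in Set.Ioi 0, Real.exp (-(x/2)) * x ^ (σ - 1) = (2:ℝ) ^ σ * Real.Gamma σ := by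
  have h := Real.integral_rpow_mul_exp_neg_mul_Ioi hσ (by norm_num : (0:ℝ) < 1/2)
  rw [show ((1:ℝ)/(1/2)) = 2 by norm_num] at h
  rw [← h]
  refine setIntegral_congr_fun measurableSet_Ioi fun x hx => ?_
  rw [show -(x/2) = -(1/2 * x) by ring]
  ring

private lemma integral_le_exp {σ : ℝ} (hσ : 0 < σ) {c : ℝ} (hc : 0 < c) :
    ∫ x in Set.Ioi c, Real.exp (-x) * x ^ (σ - 1)
      ≤ Real.exp (-(c/2)) * ((2:ℝ) ^ σ * Real.Gamma σ) := by
  have key : ∫ x in Set.Ioi c, Real.exp (-x) * x ^ (σ-1)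
      ≤ ∫ x in Set.Ioi c, Real.exp (-(c/2)) * (Real.exp (-(x/2)) * x ^ (σ-1)) := by
    refine setIntegral_mono_on
      ((Real.GammaIntegral_convergent hσ).mono_set (Set.Ioi_subset_Ioi hc.le))
      (((half_integrable hσ).mono_set (Set.Ioi_subset_Ioi hc.le)).const_mul _)
      measurableSet_Ioi ?_
    intro x hx
    rw [Set.mem_Ioi] at hx
    have hx0 : 0 < x := hc.trans hx
    have hexp : Real.exp (-x) ≤ Real.exp (-(c/2)) * Real.exp (-(x/2)) := by
      rw [← Real.exp_add]
      apply Real.exp_le_exp.2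
      linarith
    calc Real.exp (-x) * x ^ (σ-1) ≤ (Real.exp (-(c/2)) * Real.exp (-(x/2))) * x ^ (σ-1) :=
          mul_le_mul_of_nonneg_right hexp (Real.rpow_nonneg hx0.le _)
      _ = Real.exp (-(c/2)) * (Real.exp (-(x/2)) * x ^ (σ-1)) := by ring
  refine key.trans ?_
  rw [integral_const_mul]
  refine mul_le_mul_of_nonneg_left ?_ (Real.exp_pos _).le
  rw [← half_integral hσ]
  refine setIntegral_mono_set (half_integrable hσ) ?_ ((Set.Ioi_subset_Ioi hc.le).eventuallyLE)
  filter_upwards [self_mem_ae_restrict measurableSet_Ioi] with x hx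
  exact mul_nonneg (Real.exp_pos _).le (Real.rpow_nonneg (le_of_lt hx) _)



set_option maxHeartbeats 1000000 in
/-- Under Deligne's bound, the series
`Σ_{n≥1} (a(n)/n^{k/2}) ∫_{2πn}^∞ e^{-x} x^{k/2-1} dx` converges absolutely and
`|(2/Γ(k/2)) Σ_{n≥1} (a(n)/n^{k/2}) ∫_{2πn}^∞ e^{-x} x^{k/2-1} dx| ≤ 2√k log(2k) + 1`.
(This quantity is the central value `L_f(k/2)` for a Hecke eigenform.) -/
theorem central_value_bound
    (k : ℕ) (hk : 12 ≤ k) (hkeven : Even k)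
    (a : ℕ → ℝ) (ha1 : a 1 = 1)
    (hbd : ∀ n : ℕ, 1 ≤ n →
      |a n| ≤ (n.divisors.card : ℝ) * (n : ℝ) ^ (((k : ℝ) - 1) / 2)) :
    Summable (fun n : ℕ => |a (n + 1) / ((n : ℝ) + 1) ^ ((k : ℝ) / 2)
      * ∫ x in Set.Ioi (2 * π * ((n : ℝ) + 1)), Real.exp (-x) * x ^ ((k : ℝ) / 2 - 1)|) ∧
    |2 / Real.Gamma ((k : ℝ) / 2)
      * ∑' n : ℕ, a (n + 1) / ((n : ℝ) + 1) ^ ((k : ℝ) / 2)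
        * ∫ x in Set.Ioi (2 * π * ((n : ℝ) + 1)), Real.exp (-x) * x ^ ((k : ℝ) / 2 - 1)|
      ≤ 2 * Real.sqrt k * Real.log (2 * k) + 1 := by
  have hπ : 0 < π := Real.pi_pos
  have hkR : (12:ℝ) ≤ (k:ℝ) := by exact_mod_cast hk
  set σ : ℝ := (k:ℝ)/2 with hσdef
  have hσ0 : 0 < σ := by rw [hσdef]; linarith
  have hΓ : 0 < Real.Gamma σ := Real.Gamma_pos_of_pos hσ0
  set r : ℝ := Real.exp (-π) with hrdef
  have hr0 : 0 < r := Real.exp_pos _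
  -- numeric: exp π ≥ 20
  have h20 : (20:ℝ) ≤ Real.exp π := by
    have hexp1 : (2.7182818:ℝ) ≤ Real.exp 1 := by
      have := Real.exp_one_gt_d9; linarith
    have h1 : ((2.7182818:ℝ))^(3:ℕ) ≤ (Real.exp 1)^(3:ℕ) :=
      pow_le_pow_left₀ (by norm_num) hexp1 3
    have he3 : (Real.exp 1)^(3:ℕ) = Real.exp 3 := by
      rw [← Real.exp_nat_mul]; norm_num
    have h3 : Real.exp 3 ≤ Real.exp π := Real.exp_le_exp.2 (by linarith [Real.pi_gt_three])
    calc (20:ℝ) ≤ (2.7182818:ℝ)^(3:ℕ) := by norm_num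
      _ ≤ (Real.exp 1)^(3:ℕ) := h1
      _ = Real.exp 3 := he3
      _ ≤ Real.exp π := h3
  have hr20 : r ≤ 1/20 := by
    rw [hrdef, Real.exp_neg]
    have := inv_anti₀ (by norm_num : (0:ℝ) < 20) h20
    simpa using this
  have hr1 : r < 1 := lt_of_le_of_lt hr20 (by norm_num)
  -- abbreviations
  set J : ℕ → ℝ := fun n => ∫ x in Set.Ioi (2*π*((n:ℝ)+1)), Real.exp (-x) * x ^ (σ-1)
    with hJdef
  set f : ℕ → ℝ := fun n => a (n+1) / ((n:ℝ)+1) ^ σ * J n with hfdef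
  have hm : ∀ n : ℕ, (0:ℝ) < (n:ℝ)+1 := fun n => by positivity
  have hc : ∀ n : ℕ, (0:ℝ) < 2*π*((n:ℝ)+1) := fun n => by positivity
  have hJ0 : ∀ n, 0 ≤ J n := by
    intro n
    apply setIntegral_nonneg measurableSet_Ioi
    intro x hx
    exact mul_nonneg (Real.exp_pos _).le (Real.rpow_nonneg (le_of_lt ((hc n).trans hx)) _)
  have hJle : ∀ n, J n ≤ Real.Gamma σ := fun n => integral_le_gamma hσ0 (hc n).le
  have hJexp : ∀ n, J n ≤ r ^ (n+1) * ((2:ℝ)^σ * Real.Gamma σ) := by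
    intro n
    have h := integral_le_exp hσ0 (hc n)
    have hex : Real.exp (-(2*π*((n:ℝ)+1)/2)) = r ^ (n+1) := by
      rw [hrdef, ← Real.exp_nat_mul]
      congr 1
      push_cast
      ring
    rw [hex] at h
    exact h
  -- per-term bounds
  have habs : ∀ n : ℕ, |f n| = |a (n+1)| / ((n:ℝ)+1) ^ σ * J n := by
    intro n
    rw [hfdef]
    rw [abs_mul, abs_div, abs_of_nonneg (hJ0 n), abs_of_pos (Real.rpow_pos_of_pos (hm n) σ)]
  have hfrac : ∀ n : ℕ, |a (n+1)| / ((n:ℝ)+1) ^ σ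
      ≤ (((n+1).divisors.card : ℝ)) / Real.sqrt ((n:ℝ)+1) := by
    intro n
    have hb := hbd (n+1) (Nat.le_add_left 1 n)
    have hcast : ((n+1:ℕ):ℝ) = (n:ℝ)+1 := by push_cast; ring
    rw [hcast] at hb
    have h1 : |a (n+1)| / ((n:ℝ)+1) ^ σ
        ≤ (((n+1).divisors.card : ℝ) * ((n:ℝ)+1) ^ (((k:ℝ)-1)/2)) / ((n:ℝ)+1)^σ :=
      (div_le_div_iff_of_pos_right (Real.rpow_pos_of_pos (hm n) σ)).mpr hb
    refine h1.trans_eq ?_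
    rw [mul_div_assoc, ← Real.rpow_sub (hm n)]
    have hexp : ((k:ℝ)-1)/2 - σ = -(1/2) := by rw [hσdef]; ring
    rw [hexp, Real.rpow_neg (hm n).le, Real.sqrt_eq_rpow]
    ring
  have hbound1 : ∀ n : ℕ, |f n| ≤ ((n+1).divisors.card : ℝ)/Real.sqrt ((n:ℝ)+1) * Real.Gamma σ := by
    intro n
    rw [habs n]
    exact mul_le_mul (hfrac n) (hJle n) (hJ0 n) (by positivity)
  have hdivle : ∀ n : ℕ, ((n+1).divisors.card : ℝ) ≤ (n:ℝ)+1 := by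
    intro n
    have hsub : (n+1).divisors ⊆ Finset.Icc 1 (n+1) := by
      intro d hd
      rw [Nat.mem_divisors] at hd
      rw [Finset.mem_Icc]
      exact ⟨Nat.pos_of_dvd_of_pos hd.1 n.succ_pos, Nat.le_of_dvd n.succ_pos hd.1⟩
    have hcard : (n+1).divisors.card ≤ n+1 := by
      calc (n+1).divisors.card ≤ (Finset.Icc 1 (n+1)).card := Finset.card_le_card hsub
        _ = n+1 := by rw [Nat.card_Icc]; omega
    exact_mod_cast hcard
  have hbound2 : ∀ n : ℕ, |f n| ≤ ((n:ℝ)+1) * ((2:ℝ)^σ * Real.Gamma σ) * r^(n+1) := by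
    intro n
    rw [habs n]
    have hsq1 : (1:ℝ) ≤ Real.sqrt ((n:ℝ)+1) := by
      have h := Real.sqrt_le_sqrt (show (1:ℝ) ≤ (n:ℝ)+1 by linarith [hm n])
      rwa [Real.sqrt_one] at h
    have h1 : |a (n+1)| / ((n:ℝ)+1) ^ σ ≤ (n:ℝ)+1 := by
      refine (hfrac n).trans ?_
      calc ((n+1).divisors.card : ℝ)/Real.sqrt ((n:ℝ)+1) ≤ ((n+1).divisors.card : ℝ) :=
            div_le_self (by positivity) hsq1
        _ ≤ (n:ℝ)+1 := hdivle n
    calc |a (n+1)| / ((n:ℝ)+1) ^ σ * J n ≤ ((n:ℝ)+1) * (r^(n+1) * ((2:ℝ)^σ * Real.Gamma σ)) :=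
          mul_le_mul h1 (hJexp n) (hJ0 n) (by positivity)
      _ = ((n:ℝ)+1) * ((2:ℝ)^σ * Real.Gamma σ) * r^(n+1) := by ring
  -- summability
  have hg1 : Summable (fun n : ℕ => ((n:ℝ)+1) * r^(n+1)) := by
    have h1 : Summable (fun n : ℕ => ((n:ℝ)) * r^n) := by
      have := summable_pow_mul_geometric_of_norm_lt_one 1
        (r := r) (by rw [Real.norm_eq_abs, abs_of_pos hr0]; exact hr1)
      simpa using this
    have h2 : Summable (fun n : ℕ => r^n) := summable_geometric_of_lt_one hr0.le hr1
    refine ((h1.add h2).mul_left r).congr fun n => ?_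
    push_cast
    ring
  have hgsum : Summable (fun n : ℕ => ((n:ℝ)+1) * ((2:ℝ)^σ * Real.Gamma σ) * r^(n+1)) := by
    refine (hg1.mul_left ((2:ℝ)^σ * Real.Gamma σ)).congr fun n => ?_
    ring
  have habs_sum : Summable (fun n : ℕ => |f n|) :=
    Summable.of_nonneg_of_le (fun n => abs_nonneg _) hbound2 hgsum
  refine ⟨habs_sum, ?_⟩
  -- the split point
  obtain ⟨N, hNdef⟩ : ∃ N : ℕ, N = k / 6 + 1 := ⟨_, rfl⟩
  have hN1 : 1 ≤ N := by omega
  have h4N : 4 * N ≤ k := by omega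
  have h6N : k ≤ 6 * N := by omega
  have hNR : (1:ℝ) ≤ (N:ℝ) := by exact_mod_cast hN1
  -- main part
  have hmain : ∑ i ∈ Finset.range N, |f i|
      ≤ Real.Gamma σ * (2 * Real.sqrt N * (Real.log N + 1)) := by
    calc ∑ i ∈ Finset.range N, |f i|
        ≤ ∑ i ∈ Finset.range N, (((i+1).divisors.card : ℝ)/Real.sqrt ((i:ℝ)+1) * Real.Gamma σ) :=
          Finset.sum_le_sum fun i _ => hbound1 i
      _ = (∑ n ∈ Finset.Icc 1 N, ((n.divisors.card : ℝ)/Real.sqrt n)) * Real.Gamma σ := by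
          rw [Finset.sum_mul]
          rw [← Finset.Ico_add_one_right_eq_Icc, Finset.sum_Ico_eq_sum_range]
          norm_num
          refine Finset.sum_congr rfl fun i _ => ?_
          rw [Nat.add_comm 1 i]
          push_cast
          ring
      _ ≤ (2 * Real.sqrt N * (Real.log N + 1)) * Real.Gamma σ :=
          mul_le_mul_of_nonneg_right (hyperbola N) hΓ.le
      _ = Real.Gamma σ * (2 * Real.sqrt N * (Real.log N + 1)) := mul_comm _ _
  -- tail part
  have h2r : 2*r < 1 := by linarith
  have h2r0 : (0:ℝ) ≤ 2*r := by positivity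
  have htailb : ∀ i : ℕ, |f (i+N)|
      ≤ ((N:ℝ)+1) * ((2:ℝ)^σ * Real.Gamma σ) * r^(N+1) * (2*r)^i := by
    intro i
    have h2i : ((i:ℝ)+(N:ℝ)+1) ≤ ((N:ℝ)+1) * 2^i := by
      have hn2 : (i+1 : ℕ) ≤ 2^i := Nat.lt_two_pow_self
      have h2 : ((i:ℝ)+1) ≤ 2^i := by exact_mod_cast hn2
      nlinarith [hNR, pow_pos (by norm_num : (0:ℝ) < 2) i]
    calc |f (i+N)| ≤ (((i+N:ℕ):ℝ)+1) * ((2:ℝ)^σ * Real.Gamma σ) * r^((i+N)+1) := hbound2 (i+N)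
      _ = ((i:ℝ)+(N:ℝ)+1) * (((2:ℝ)^σ * Real.Gamma σ) * (r^(N+1) * r^i)) := by
          rw [show i+N+1 = (N+1)+i by omega, pow_add]
          push_cast
          ring
      _ ≤ (((N:ℝ)+1) * 2^i) * (((2:ℝ)^σ * Real.Gamma σ) * (r^(N+1) * r^i)) :=
          mul_le_mul_of_nonneg_right h2i (by positivity)
      _ = ((N:ℝ)+1) * ((2:ℝ)^σ * Real.Gamma σ) * r^(N+1) * (2*r)^i := by
          rw [mul_pow]
          ring
  have htsum_shift : Summable (fun i => |f (i+N)|) := (summable_nat_add_iff N).mpr habs_sum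
  have hgeo : Summable (fun i : ℕ => ((N:ℝ)+1) * ((2:ℝ)^σ * Real.Gamma σ) * r^(N+1) * (2*r)^i) :=
    (summable_geometric_of_lt_one h2r0 h2r).mul_left _
  have htail : ∑' i, |f (i+N)| ≤ Real.Gamma σ * (1/2) := by
    have h1 : ∑' i, |f (i+N)|
        ≤ ((N:ℝ)+1) * ((2:ℝ)^σ * Real.Gamma σ) * r^(N+1) * (1-2*r)⁻¹ := by
      calc ∑' i, |f (i+N)|
          ≤ ∑' i, (((N:ℝ)+1) * ((2:ℝ)^σ * Real.Gamma σ) * r^(N+1) * (2*r)^i) :=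
            Summable.tsum_le_tsum htailb htsum_shift hgeo
        _ = _ := by rw [tsum_mul_left, tsum_geometric_of_lt_one h2r0 h2r]
    refine h1.trans ?_
    -- numeric bound
    have hNp : ((N:ℝ)+1) ≤ 2^N := by
      have := (Nat.lt_two_pow_self (n := N))
      exact_mod_cast this
    have h2σ : (2:ℝ)^σ ≤ (8:ℝ)^N := by
      have hσ3N : σ ≤ ((3*N : ℕ):ℝ) := by
        have ha1' : (k:ℝ) ≤ ((6*N:ℕ):ℝ) := by exact_mod_cast h6N
        have ha2 : ((6*N:ℕ):ℝ) = 2*((3*N:ℕ):ℝ) := by push_cast; ring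
        rw [hσdef]
        linarith [ha2 ▸ ha1']
      calc (2:ℝ)^σ ≤ (2:ℝ)^((3*N : ℕ):ℝ) :=
            Real.rpow_le_rpow_of_exponent_le one_le_two hσ3N
        _ = (2:ℝ)^(3*N : ℕ) := Real.rpow_natCast 2 (3*N)
        _ = (8:ℝ)^N := by rw [pow_mul]; norm_num
    have hrp : r^(N+1) ≤ (1/20:ℝ)^(N+1) := pow_le_pow_left₀ hr0.le hr20 (N+1)
    have hinv : (1-2*r)⁻¹ ≤ ((9:ℝ)/10)⁻¹ := by
      apply inv_anti₀ (by linarith)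
      linarith
    have hchain : ((N:ℝ)+1) * (2:ℝ)^σ * r^(N+1) * (1-2*r)⁻¹
        ≤ (2:ℝ)^N * 8^N * (1/20)^(N+1) * ((9:ℝ)/10)⁻¹ := by
      have p1 : (0:ℝ) ≤ (N:ℝ)+1 := by positivity
      have p2 : (0:ℝ) ≤ (2:ℝ)^σ := by positivity
      have p3 : (0:ℝ) ≤ r^(N+1) := by positivity
      have p4 : (0:ℝ) ≤ (1-2*r)⁻¹ := by
        apply inv_nonneg.mpr
        linarith
      gcongr
    have hnum : (2:ℝ)^N * 8^N * (1/20)^(N+1) * ((9:ℝ)/10)⁻¹ ≤ 1/2 := by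
      have h45 : ((4:ℝ)/5)^N ≤ 1 := pow_le_one₀ (by norm_num) (by norm_num)
      calc (2:ℝ)^N * 8^N * (1/20)^(N+1) * ((9:ℝ)/10)⁻¹
          = ((2:ℝ)^N * 8^N * (1/20)^N) * ((1/20) * (10/9)) := by
            rw [pow_succ]
            norm_num
            ring
        _ = ((4:ℝ)/5)^N * (1/18) := by
            rw [← mul_pow, ← mul_pow]
            norm_num
        _ ≤ 1 * (1/18) := mul_le_mul_of_nonneg_right h45 (by norm_num)
        _ ≤ 1/2 := by norm_num
    calc ((N:ℝ)+1) * ((2:ℝ)^σ * Real.Gamma σ) * r^(N+1) * (1-2*r)⁻¹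
        = (((N:ℝ)+1) * (2:ℝ)^σ * r^(N+1) * (1-2*r)⁻¹) * Real.Gamma σ := by ring
      _ ≤ (1/2) * Real.Gamma σ :=
          mul_le_mul_of_nonneg_right (hchain.trans hnum) hΓ.le
      _ = Real.Gamma σ * (1/2) := mul_comm _ _
  -- assembling
  have htsum_split : ∑' n, |f n| = ∑ i ∈ Finset.range N, |f i| + ∑' i, |f (i+N)| :=
    (Summable.sum_add_tsum_nat_add N habs_sum).symm
  have hsum_le : ∑' n, |f n|
      ≤ Real.Gamma σ * (2*Real.sqrt N*(Real.log N+1)) + Real.Gamma σ * (1/2) := by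
    rw [htsum_split]
    exact add_le_add hmain htail
  have habs_le : |∑' n, f n| ≤ ∑' n, |f n| := by
    have h := norm_tsum_le_tsum_norm (f := f) (by simpa [Real.norm_eq_abs] using habs_sum)
    simpa [Real.norm_eq_abs] using h
  have hfinal : |2 / Real.Gamma σ * ∑' n, f n| ≤ 2*(2*Real.sqrt N*(Real.log N+1)) + 1 := by
    rw [abs_mul, abs_of_pos (by positivity : (0:ℝ) < 2/Real.Gamma σ)]
    calc (2/Real.Gamma σ) * |∑' n, f n|
        ≤ (2/Real.Gamma σ) * (Real.Gamma σ * (2*Real.sqrt N*(Real.log N+1)) + Real.Gamma σ * (1/2)) :=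
          mul_le_mul_of_nonneg_left (habs_le.trans hsum_le) (by positivity)
      _ = 2*(2*Real.sqrt N*(Real.log N+1)) + 1 := by
          field_simp
  refine hfinal.trans ?_
  -- final numeric: 4√N(log N + 1) + 1 ≤ 2√k log(2k) + 1
  have hsqrt : 2 * Real.sqrt N ≤ Real.sqrt k := by
    have h1 : Real.sqrt (4*(N:ℝ)) ≤ Real.sqrt k := by
      apply Real.sqrt_le_sqrt
      have : ((4*N : ℕ):ℝ) ≤ (k:ℝ) := by exact_mod_cast h4N
      push_cast at this
      linarith
    rw [show (4:ℝ)*(N:ℝ) = 2^2 * (N:ℝ) by norm_num, Real.sqrt_mul (by positivity),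
      Real.sqrt_sq (by norm_num : (0:ℝ) ≤ 2)] at h1
    exact h1
  have hlog : Real.log N + 1 ≤ Real.log (2*(k:ℝ)) := by
    have he3 : Real.exp 1 ≤ 3 := by linarith [Real.exp_one_lt_d9]
    have hNe : (N:ℝ) * Real.exp 1 ≤ 2*(k:ℝ) := by
      have h4 : 4*(N:ℝ) ≤ (k:ℝ) := by exact_mod_cast h4N
      nlinarith [Real.exp_pos 1]
    calc Real.log N + 1 = Real.log ((N:ℝ) * Real.exp 1) := by
          rw [Real.log_mul (by positivity) (Real.exp_ne_zero 1), Real.log_exp]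
      _ ≤ Real.log (2*(k:ℝ)) := Real.log_le_log (by positivity) hNe
  have hlogN0 : (0:ℝ) ≤ Real.log N + 1 := by
    have := Real.log_nonneg hNR
    linarith
  have hmu := mul_le_mul hsqrt hlog hlogN0 (Real.sqrt_nonneg (k:ℝ))
  nlinarith [hmu]
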